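/- For parameters ε_x, ε_y ∈ (-1,1), consider the 3×3 real matrices M₀ = [[(1-ε_y)/2, 1, 0], [-(1+ε_x)/2, 0, 1], [1, 0, 0]] and M₁ = [[(1-ε_x)/2, 1, 0], [-(1+ε_y)/2, 0, 1], [1, 0, 0]]. Then the following are equivalent: (1) ε_x + ε_y < 0; (2) there exists a real number λ > 1 which is an eigenvalue of M₁M₀, such that every complex eigenvalue μ of M₁M₀ satisfies |μ| ≤ λ, and there exists w ∈ ℝ³ with (M₁M₀) w = λ w and w_i · w_j > 0 for all i, j ∈ {1,2,3}; (3) the same condition as (2) with M₁M₀ replaced by M₀M₁. -/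

import Mathlib

open Matrix MeasureTheory Filter Set

noncomputable section

/-- `μ ∈ ℂ` is an eigenvalue of the real matrix `M` regarded as a complex matrix. -/
def IsCEigenvalue {N : ℕ} (M : Matrix (Fin N) (Fin N) ℝ) (μ : ℂ) : Prop :=
  ∃ v : Fin N → ℂ, v ≠ 0 ∧ (M.map Complex.ofReal) *ᵥ v = μ • v

/-- The basic transition matrix `M₀` of the RSP cycle `C₀`. -/
def M₀ (εx εy : ℝ) : Matrix (Fin 3) (Fin 3) ℝ :=
  !![(1 - εy)/2, 1, 0; -(1 + εx)/2, 0, 1; 1, 0, 0]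

/-- The basic transition matrix `M₁` of the RSP cycle `C₀`. -/
def M₁ (εx εy : ℝ) : Matrix (Fin 3) (Fin 3) ℝ :=
  !![(1 - εx)/2, 1, 0; -(1 + εy)/2, 0, 1; 1, 0, 0]

/-- Conditions (i)-(iii) of Lemma 3.5 for a real `3 × 3` matrix `A`: there is a real
eigenvalue `λ > 1` dominating the moduli of all complex eigenvalues, with a real
eigenvector all of whose components have the same strict sign. -/
def GoodCond (A : Matrix (Fin 3) (Fin 3) ℝ) : Prop :=
  ∃ lam : ℝ, 1 < lam ∧ IsCEigenvalue A (lam : ℂ) ∧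
    (∀ μ : ℂ, IsCEigenvalue A μ → ‖μ‖ ≤ lam) ∧
    ∃ w : Fin 3 → ℝ, A *ᵥ w = lam • w ∧ ∀ i j : Fin 3, 0 < w i * w j

lemma prodM (x y : ℝ) :
    M₁ x y * M₀ x y =
      !![(1-x)/2*((1-y)/2) - (1+x)/2, (1-x)/2, 1;
         -(1+y)/2*((1-y)/2) + 1, -(1+y)/2, 0;
         (1-y)/2, 1, 0] := by
  ext i j
  fin_cases i <;> fin_cases j <;> simp [M₀, M₁, Matrix.mul_fin_three] <;> ring

lemma swapM (x y : ℝ) : M₀ x y * M₁ x y = M₁ y x * M₀ y x := by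
  simp [M₀, M₁, Matrix.mul_fin_three]

lemma cubic_of_eig (x y : ℝ) (μ : ℂ) (h : IsCEigenvalue (M₁ x y * M₀ x y) μ) :
    μ^3 - (((x*y - 3*x - 3*y - 3)/4 : ℝ) : ℂ) * μ^2
      + (((x*y + 3*x + 3*y - 3)/4 : ℝ) : ℂ) * μ - 1 = 0 := by
  obtain ⟨v, hv, hmv⟩ := h
  have h0 : (μ • (1 : Matrix (Fin 3) (Fin 3) ℂ) - (M₁ x y * M₀ x y).map Complex.ofReal) *ᵥ v = 0 := by
    rw [sub_mulVec, smul_mulVec, one_mulVec, hmv, sub_self]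
  have hdet : (μ • (1 : Matrix (Fin 3) (Fin 3) ℂ) - (M₁ x y * M₀ x y).map Complex.ofReal).det = 0 :=
    (Matrix.exists_mulVec_eq_zero_iff).mp ⟨v, hv, h0⟩
  rw [prodM] at hdet
  simp [Matrix.det_fin_three, Matrix.smul_apply, Matrix.one_apply, Matrix.map_apply,
    Matrix.vecHead, Matrix.vecTail] at hdet
  push_cast
  linear_combination hdet

lemma mapEig {N : ℕ} (M : Matrix (Fin N) (Fin N) ℝ) (v : Fin N → ℝ) (c : ℝ)
    (h : M *ᵥ v = c • v) :
    (M.map Complex.ofReal) *ᵥ (fun i => (v i : ℂ)) = (c : ℂ) • (fun i => (v i : ℂ)) := by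
  funext i
  have h1 := congrFun h i
  simp [Matrix.mulVec, dotProduct, Matrix.map_apply] at h1 ⊢
  exact_mod_cast h1

lemma eigvec (x y lam : ℝ) (hp : lam^3 - (x*y - 3*x - 3*y - 3)/4 * lam^2
      + (x*y + 3*x + 3*y - 3)/4 * lam - 1 = 0) :
    (M₁ x y * M₀ x y) *ᵥ ![lam*(lam + (1+y)/2), lam*((3+y^2)/4), (1-y)/2*lam + 1]
      = lam • ![lam*(lam + (1+y)/2), lam*((3+y^2)/4), (1-y)/2*lam + 1] := by
  funext i
  fin_cases i
  · simp [M₀, M₁, Matrix.mul_fin_three, Matrix.mulVec, dotProduct, Fin.sum_univ_three]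
    linear_combination -hp
  · simp [M₀, M₁, Matrix.mul_fin_three, Matrix.mulVec, dotProduct, Fin.sum_univ_three]
    ring
  · simp [M₀, M₁, Matrix.mul_fin_three, Matrix.mulVec, dotProduct, Fin.sum_univ_three]
    ring

set_option maxHeartbeats 1000000 in
lemma keyIff (x y : ℝ) (hx1 : -1 < x) (hx2 : x < 1) (hy1 : -1 < y) (hy2 : y < 1) :
    x + y < 0 ↔ GoodCond (M₁ x y * M₀ x y) := by
  set T : ℝ := (x*y - 3*x - 3*y - 3)/4 with hT
  set S : ℝ := (x*y + 3*x + 3*y - 3)/4 with hS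
  have hTlt : T < 1 := by rw [hT]; nlinarith [mul_pos (sub_pos.2 hx2) (sub_pos.2 hy2)]
  constructor
  · intro hs
    -- find the root lam ∈ (1,4)
    obtain ⟨lam, hlam14, hplam⟩ : ∃ lam ∈ Ioo (1:ℝ) 4,
        lam^3 - T*lam^2 + S*lam - 1 = 0 := by
      have hc : ContinuousOn (fun t : ℝ => t^3 - T*t^2 + S*t - 1) (Icc 1 4) := by
        fun_prop
      have h1 : (fun t : ℝ => t^3 - T*t^2 + S*t - 1) 1 < 0 := by
        simp only; rw [hT, hS]; nlinarith
      have h4 : 0 < (fun t : ℝ => t^3 - T*t^2 + S*t - 1) 4 := by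
        simp only; rw [hT, hS]; nlinarith
      have := intermediate_value_Ioo (by norm_num : (1:ℝ) ≤ 4) hc
      obtain ⟨lam, hmem, heq⟩ := this ⟨h1, h4⟩
      exact ⟨lam, hmem, heq⟩
    obtain ⟨hlam1, hlam4⟩ := hlam14
    have hlam0 : (0:ℝ) < lam := by linarith
    set w : Fin 3 → ℝ := ![lam*(lam + (1+y)/2), lam*((3+y^2)/4), (1-y)/2*lam + 1] with hw
    have hw0 : 0 < w 0 := by simp [hw]; nlinarith
    have hw1 : 0 < w 1 := by simp [hw]; nlinarith
    have hw2 : 0 < w 2 := by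
      show 0 < (1-y)/2*lam + 1
      nlinarith
    have heig : (M₁ x y * M₀ x y) *ᵥ w = lam • w := eigvec x y lam (by rw [hT, hS] at hplam; exact hplam)
    refine ⟨lam, hlam1, ?_, ?_, w, heig, ?_⟩
    · refine ⟨fun i => ((w i : ℝ) : ℂ), ?_, mapEig _ _ _ heig⟩
      intro hzero
      have h0 : ((w 0 : ℝ) : ℂ) = 0 := congrFun hzero 0
      rw [Complex.ofReal_eq_zero] at h0
      exact hw0.ne' h0
    · -- dominance
      intro μ hμ
      have hcube := cubic_of_eig x y μ hμ
      rw [← hT, ← hS] at hcube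
      by_cases hmul : μ = (lam : ℂ)
      · rw [hmul]; simp [Complex.norm_real, abs_of_pos hlam0]
      -- factor: (μ - lam) * (lam*μ^2 + lam*(lam - T)*μ + 1) = 0
      have hfac : (μ - (lam:ℂ)) * ((lam:ℂ)*μ^2 + (lam:ℂ)*((lam:ℂ) - (T:ℂ))*μ + 1) = 0 := by
        have hplamC : (lam:ℂ)^3 - (T:ℂ)*(lam:ℂ)^2 + (S:ℂ)*(lam:ℂ) - 1 = 0 := by
          exact_mod_cast congrArg (Complex.ofReal) hplam
        linear_combination (lam:ℂ) * hcube - μ * hplamC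
      have hQ : (lam:ℂ)*μ^2 + (lam:ℂ)*((lam:ℂ) - (T:ℂ))*μ + 1 = 0 :=
        (mul_eq_zero.mp hfac).resolve_left (sub_ne_zero.mpr hmul)
      set r : ℝ := μ.re with hr
      set m : ℝ := μ.im with hm
      have hre : lam*(r^2 - m^2) + lam*(lam - T)*r + 1 = 0 := by
        have := congrArg Complex.re hQ
        simpa [pow_two, Complex.mul_re, Complex.mul_im, Complex.add_re, Complex.add_im,
          Complex.sub_re, Complex.sub_im, Complex.ofReal_re, Complex.ofReal_im] using this
      have him : lam*(r*m + m*r) + lam*(lam - T)*m = 0 := by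
        have := congrArg Complex.im hQ
        simpa [pow_two, Complex.mul_re, Complex.mul_im, Complex.add_re, Complex.add_im,
          Complex.sub_re, Complex.sub_im, Complex.ofReal_re, Complex.ofReal_im] using this
      by_cases hm0 : m = 0
      · -- real root
        have hμr : μ = (r:ℂ) := by
          apply Complex.ext
          · simp [hr]
          · simp [← hm, hm0]
        have hQr : lam*r^2 + lam*(lam - T)*r + 1 = 0 := by
          rw [hm0] at hre; linarith [hre]
        have hrne : r ≠ lam := by
          intro h; exact hmul (by rw [hμr, h])
        have hrle : ¬ (1 < r) := by
          intro hr1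
          nlinarith [hQr, mul_pos hlam0 (show (0:ℝ) < r by linarith),
            mul_pos (mul_pos hlam0 (show (0:ℝ) < r by linarith)) (show (0:ℝ) < r - 1 by linarith),
            mul_pos (mul_pos hlam0 (show (0:ℝ) < r by linarith)) (show (0:ℝ) < lam - 1 by linarith),
            mul_pos (mul_pos hlam0 (show (0:ℝ) < r by linarith)) (show (0:ℝ) < 1 - T by linarith)]
        have hrgt : ¬ (r ≤ -1) := by
          intro hr1
          have hpr0 : lam * (r^3 - T*r^2 + S*r - 1) = 0 := by
            linear_combination (r - lam) * hQr + r * hplam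
          have hpr : r^3 - T*r^2 + S*r - 1 = 0 :=
            (mul_eq_zero.mp hpr0).resolve_left hlam0.ne'
          have hB : 0 < r*(r-1) := mul_pos_of_neg_of_neg (by linarith) (by linarith)
          have hxy : -1 < x*y := by nlinarith
          have hC : r*(r-1)*((3-x*y)/4) < r*(r-1)*1 :=
            mul_lt_mul_of_pos_left (by linarith) hB
          have hD : 3*(x+y)*(r*(r+1))/4 ≤ 0 := by
            have h1 : 0 ≤ r*(r+1) := by
              nlinarith [mul_nonneg (show (0:ℝ) ≤ -r by linarith) (show (0:ℝ) ≤ -(r+1) by linarith)]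
            nlinarith [h1, hs]
          have hE : 0 ≤ (r+1)^2*(1-r) :=
            mul_nonneg (sq_nonneg _) (by linarith)
          nlinarith [hpr, hC, hD, hE]
        push_neg at hrle hrgt
        rw [hμr, Complex.norm_real, Real.norm_eq_abs]
        rw [abs_le]
        constructor <;> linarith
      · -- complex root : |μ|^2 = 1/lam
        have h2rb : 2*r + (lam - T) = 0 := by
          have : m * (lam * (2*r + (lam - T))) = 0 := by linear_combination him
          rcases mul_eq_zero.mp this with h | h
          · exact absurd h hm0
          · rcases mul_eq_zero.mp h with h' | h'
            · exact absurd h' hlam0.ne'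
            · exact h'
        have hns : lam * (r^2 + m^2) = 1 := by linear_combination (lam*r)*h2rb - hre
        have habs : ‖μ‖^2 = r^2 + m^2 := by
          rw [Complex.sq_norm, Complex.normSq_apply, hr, hm]; ring
        nlinarith [norm_nonneg μ, habs, hns]
    · intro i j
      fin_cases i <;> fin_cases j <;> exact mul_pos (by assumption) (by assumption)
  · -- reverse
    rintro ⟨lam, hlam1, hev, _, _⟩
    have hcube := cubic_of_eig x y (lam : ℂ) hev
    rw [← hT, ← hS] at hcube
    have hp : lam^3 - T*lam^2 + S*lam - 1 = 0 := by exact_mod_cast hcube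
    by_contra hs
    push_neg at hs
    -- p(1) = S - T = 3(x+y)/2 ≥ 0 ; factorization gives T ≥ 1 + lam + 1/lam > 2
    have hST : 0 ≤ S - T := by rw [hS, hT]; linarith
    have hlam0 : (0:ℝ) < lam := by linarith
    -- (1-lam)*(lam + lam*(lam-T) + 1) = (S-T)*lam   [times lam version]
    have hfac : (1-lam)*(lam + lam*(lam-T) + 1) = (S-T)*lam := by linear_combination -hp
    have hQ1 : lam + lam*(lam-T) + 1 ≤ 0 := by nlinarith
    nlinarith [hQ1, hTlt, hlam1, sq_nonneg (lam - 1)]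


/-- For the RSP transition matrices, conditions (i)-(iii) of Lemma 3.5 hold for
`M₁M₀`, and likewise for `M₀M₁`, if and only if `εx + εy < 0`. -/
theorem stmt11 (εx εy : ℝ) (hx : εx ∈ Set.Ioo (-1 : ℝ) 1) (hy : εy ∈ Set.Ioo (-1 : ℝ) 1) :
    (εx + εy < 0 ↔ GoodCond (M₁ εx εy * M₀ εx εy)) ∧
    (εx + εy < 0 ↔ GoodCond (M₀ εx εy * M₁ εx εy)) := by
  obtain ⟨hx1, hx2⟩ := hx
  obtain ⟨hy1, hy2⟩ := hy
  refine ⟨keyIff εx εy hx1 hx2 hy1 hy2, ?_⟩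
  rw [swapM, show εx + εy = εy + εx from add_comm _ _]
  exact keyIff εy εx hy1 hy2 hx1 hx2
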